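/- (Explicit annulus for a cubic energy, Proposition II′.) Assume the cubic setting and suppose η₁ < η₀. Then H(q) > H(p) for every q ∈ ℝⁿ with η₁ < |q − p| < η₀(1 + √(1 − η₁/η₀)); in particular this annulus is nonempty. -/

import Mathlib

set_option maxHeartbeats 1000000 in
/-- **Proposition II′ (Explicit annulus for a cubic energy).** Let `H(p+x) = H(p) + T(x,x,x)
+ B(x,x) + C(x)` with `T` symmetric trilinear, `B` symmetric bilinear, `C` linear; suppose
`B(v,v) ≥ λ > 0`, `2|C(v)| ≤ η₁ B(v,v)` and `2|T(v,v,v)| η₀ ≤ B(v,v)` for all unit `v`, with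
`η₀ > 0`, `η₁ ≥ 0`. If `η₁ < η₀` then `H(q) > H(p)` on the nonempty annulus
`η₁ < |q−p| < η₀(1 + √(1 − η₁/η₀))`. -/
theorem cubic_energy_annulus (n : ℕ) (p : EuclideanSpace ℝ (Fin n))
    (H : EuclideanSpace ℝ (Fin n) → ℝ)
    (T : EuclideanSpace ℝ (Fin n) →ₗ[ℝ] EuclideanSpace ℝ (Fin n) →ₗ[ℝ]
      EuclideanSpace ℝ (Fin n) →ₗ[ℝ] ℝ)
    (B : EuclideanSpace ℝ (Fin n) →ₗ[ℝ] EuclideanSpace ℝ (Fin n) →ₗ[ℝ] ℝ)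
    (C : EuclideanSpace ℝ (Fin n) →ₗ[ℝ] ℝ)
    (hT : ∀ x y z, T x y z = T y x z ∧ T x y z = T x z y)
    (hB : ∀ x y, B x y = B y x)
    (hH : ∀ x, H (p + x) = H p + T x x x + B x x + C x)
    (lam : ℝ) (hlam : 0 < lam)
    (hbv : ∀ v : EuclideanSpace ℝ (Fin n), ‖v‖ = 1 → lam ≤ B v v)
    (η₀ η₁ : ℝ) (hη₀ : 0 < η₀) (hη₁ : 0 ≤ η₁)
    (hcv : ∀ v : EuclideanSpace ℝ (Fin n), ‖v‖ = 1 → 2 * |C v| ≤ η₁ * B v v)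
    (hav : ∀ v : EuclideanSpace ℝ (Fin n), ‖v‖ = 1 → 2 * |T v v v| * η₀ ≤ B v v)
    (hlt : η₁ < η₀) :
    η₁ < η₀ * (1 + Real.sqrt (1 - η₁ / η₀)) ∧
    ∀ q : EuclideanSpace ℝ (Fin n),
      η₁ < ‖q - p‖ → ‖q - p‖ < η₀ * (1 + Real.sqrt (1 - η₁ / η₀)) → H p < H q := by

  set s := Real.sqrt (1 - η₁ / η₀) with hs
  have hrat : 0 < 1 - η₁ / η₀ := by
    have : η₁ / η₀ < 1 := (div_lt_one hη₀).2 hlt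
    linarith
  have hs0 : 0 < s := Real.sqrt_pos.2 hrat
  have hs2 : s ^ 2 = 1 - η₁ / η₀ := Real.sq_sqrt hrat.le
  have hs1 : s ≤ 1 := by nlinarith [div_nonneg hη₁ hη₀.le]
  have hkey : η₀ * (1 - s) ≤ η₁ := by
    have : η₁ = η₀ * (1 - s ^ 2) := by
      have h : η₁ / η₀ * η₀ = η₁ := by field_simp
      linear_combination η₀ * hs2 - h
    nlinarith
  have h1 : η₁ < η₀ * (1 + s) := by nlinarith
  refine ⟨h1, fun q hq1 hq2 => ?_⟩
  set r := ‖q - p‖ with hr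
  have hr0 : 0 < r := lt_of_le_of_lt hη₁ hq1
  set v : EuclideanSpace ℝ (Fin n) := r⁻¹ • (q - p) with hv
  have hvn : ‖v‖ = 1 := by
    rw [hv, norm_smul, norm_inv, norm_norm]
    field_simp
    exact div_self hr0.ne'
  have hx : q - p = r • v := by
    rw [hv, smul_smul, mul_inv_cancel₀ hr0.ne', one_smul]
  have hqp : q = p + r • v := by
    rw [← hx]; abel
  set a := T v v v with ha
  set b := B v v with hb2
  set c := C v with hc2
  have hHq : H q = H p + r ^ 3 * a + r ^ 2 * b + r * c := by
    rw [hqp, hH]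
    simp only [map_smul, LinearMap.smul_apply, smul_eq_mul]
    ring
  have hab : 2 * |a| * η₀ ≤ b := hav v hvn
  have hcb : 2 * |c| ≤ η₁ * b := hcv v hvn
  have hbl : lam ≤ b := hbv v hvn
  have hb0 : 0 < b := lt_of_lt_of_le hlam hbl
  -- quadratic negativity
  have hquad : r ^ 2 - 2 * η₀ * r + η₀ * η₁ < 0 := by
    have hlow : η₀ * (1 - s) < r := lt_of_le_of_lt hkey hq1
    have hηη : η₀ * η₁ = η₀ ^ 2 * (1 - s ^ 2) := by
      have h : η₁ / η₀ * η₀ = η₁ := by field_simp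
      linear_combination η₀ ^ 2 * hs2 - η₀ * h
    nlinarith
  rw [hHq]
  have hgoal : 0 < r ^ 3 * a + r ^ 2 * b + r * c := by
    have ha1 : (0:ℝ) ≤ a + |a| := by linarith [neg_abs_le a]
    have hc1 : (0:ℝ) ≤ c + |c| := by linarith [neg_abs_le c]
    have h2 := mul_nonneg (mul_nonneg (by linarith : (0:ℝ) ≤ 2 * η₀) (pow_pos hr0 3).le) ha1
    have h3 := mul_nonneg (pow_pos hr0 3).le (by linarith : (0:ℝ) ≤ b - 2 * |a| * η₀)
    have hA : -(r ^ 3 * b) ≤ 2 * η₀ * (r ^ 3 * a) := by nlinarith [h2, h3]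
    have h4 := mul_nonneg (mul_nonneg (by linarith : (0:ℝ) ≤ 2 * η₀) hr0.le) hc1
    have h5 := mul_nonneg (mul_nonneg hη₀.le hr0.le) (by linarith : (0:ℝ) ≤ η₁ * b - 2 * |c|)
    have hC : -(r * (η₀ * η₁ * b)) ≤ 2 * η₀ * (r * c) := by nlinarith [h4, h5]
    have hQ : 0 < -(r ^ 3 * b) + 2 * η₀ * (r ^ 2 * b) - r * (η₀ * η₁ * b) := by
      have h6 := mul_pos (mul_pos hr0 hb0) (neg_pos.2 hquad)
      nlinarith [h6]
    have hfin : 0 < 2 * η₀ * (r ^ 3 * a + r ^ 2 * b + r * c) := by nlinarith [hA, hC, hQ]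
    nlinarith [hfin, hη₀]
  linarith
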